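/- There do not exist elements a, b of the alternating group A_5 ≤ Perm (Fin 5) such that the subgroup generated by a and b is all of A_5 and the commutator [a,b] has cycle type {2,2}. Equivalently, A_5 admits no generating (1;2)-vector (a, b, c) with [a,b]·c = 1 and c of cycle type {2,2}. (This is the group-theoretic content of Theorem 3.9(6a): if f has a single branch value, of type [2,2,1], over a genus-1 base, then the monodromy group is S_5.) -/

import Mathlib

set_option maxRecDepth 100000
set_option maxHeartbeats 1000000

open Equiv
open scoped commutatorElement

/-- Every even permutation of `Fin 5` is trivial or conjugate (in `S₅`) to one of
three representatives. -/
lemma even_perm_conj_rep : ∀ a : Equiv.Perm (Fin 5), Equiv.Perm.sign a = 1 → a = 1 ∨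
    ∃ g : Equiv.Perm (Fin 5), g * a * g⁻¹ = c[(0:Fin 5),1,2] ∨ g * a * g⁻¹ = c[(0:Fin 5),1,2,3,4] ∨
      g * a * g⁻¹ = Equiv.swap (0:Fin 5) 1 * Equiv.swap 2 3 := by decide

lemma rep_three : ∀ b : Equiv.Perm (Fin 5), Equiv.Perm.sign b = 1 →
    ⁅c[(0:Fin 5),1,2], b⁆ ^ 2 = 1 → ⁅c[(0:Fin 5),1,2], b⁆ ≠ 1 →
    ∃ x, c[(0:Fin 5),1,2] x = x ∧ b x = x := by decide

lemma rep_five : ∀ b : Equiv.Perm (Fin 5), Equiv.Perm.sign b = 1 →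
    ⁅c[(0:Fin 5),1,2,3,4], b⁆ ^ 2 = 1 → ⁅c[(0:Fin 5),1,2,3,4], b⁆ ≠ 1 →
    ∃ x, c[(0:Fin 5),1,2,3,4] x = x ∧ b x = x := by decide

lemma rep_twotwo : ∀ b : Equiv.Perm (Fin 5), Equiv.Perm.sign b = 1 →
    ⁅Equiv.swap (0:Fin 5) 1 * Equiv.swap 2 3, b⁆ ^ 2 = 1 →
    ⁅Equiv.swap (0:Fin 5) 1 * Equiv.swap 2 3, b⁆ ≠ 1 →
    ∃ x, (Equiv.swap (0:Fin 5) 1 * Equiv.swap 2 3 : Equiv.Perm (Fin 5)) x = x ∧ b x = x := by decide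

lemma conj_commutator (g a b : Equiv.Perm (Fin 5)) :
    ⁅g * a * g⁻¹, g * b * g⁻¹⁆ = g * ⁅a, b⁆ * g⁻¹ := by
  simp only [commutatorElement_def]; group

/-- If `a, b` are even permutations of `Fin 5` whose commutator is a nontrivial
involution, then `a` and `b` have a common fixed point. -/
lemma common_fixed_of_involution_commutator (a b : Equiv.Perm (Fin 5))
    (ha : Equiv.Perm.sign a = 1) (hb : Equiv.Perm.sign b = 1)
    (hsq : ⁅a, b⁆ ^ 2 = 1) (hne : ⁅a, b⁆ ≠ 1) : ∃ x, a x = x ∧ b x = x := by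
  rcases even_perm_conj_rep a ha with rfl | ⟨g, hg⟩
  · exact absurd (by simp [commutatorElement_def]) hne
  · have hb' : Equiv.Perm.sign (g * b * g⁻¹) = 1 := by simp [hb]
    have hcomm : ⁅g * a * g⁻¹, g * b * g⁻¹⁆ = g * ⁅a, b⁆ * g⁻¹ := conj_commutator g a b
    have hsq' : ⁅g * a * g⁻¹, g * b * g⁻¹⁆ ^ 2 = 1 := by
      rw [hcomm, conj_pow, hsq]; group
    have hne' : ⁅g * a * g⁻¹, g * b * g⁻¹⁆ ≠ 1 := by
      rw [hcomm]
      intro h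
      apply hne
      have := congrArg (fun z => g⁻¹ * z * g) h
      simpa [mul_assoc] using this
    have trans : (∃ x, (g * a * g⁻¹) x = x ∧ (g * b * g⁻¹) x = x) →
        ∃ x, a x = x ∧ b x = x := by
      rintro ⟨x, hx1, hx2⟩
      refine ⟨g⁻¹ x, ?_, ?_⟩
      · have : g (a (g⁻¹ x)) = x := by simpa [Equiv.Perm.mul_apply] using hx1
        calc a (g⁻¹ x) = g⁻¹ (g (a (g⁻¹ x))) := by simp
          _ = g⁻¹ x := by rw [this]
      · have : g (b (g⁻¹ x)) = x := by simpa [Equiv.Perm.mul_apply] using hx2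
        calc b (g⁻¹ x) = g⁻¹ (g (b (g⁻¹ x))) := by simp
          _ = g⁻¹ x := by rw [this]
    rcases hg with h | h | h
    · exact trans (by rw [h] at hsq' hne' ⊢; exact rep_three _ hb' hsq' hne')
    · exact trans (by rw [h] at hsq' hne' ⊢; exact rep_five _ hb' hsq' hne')
    · exact trans (by rw [h] at hsq' hne' ⊢; exact rep_twotwo _ hb' hsq' hne')

lemma exists_moving (x : Fin 5) : ∃ g ∈ alternatingGroup (Fin 5), g x ≠ x := by
  have : ∀ x : Fin 5, ∃ g : Equiv.Perm (Fin 5), Equiv.Perm.sign g = 1 ∧ g x ≠ x := by decide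
  obtain ⟨g, hg, hgx⟩ := this x
  exact ⟨g, Equiv.Perm.mem_alternatingGroup.mpr hg, hgx⟩

/-- There are no `a, b ∈ A₅` generating `A₅` whose commutator `⁅a, b⁆` has cycle
type `{2,2}`; i.e. `A₅` admits no generating `(1; 2)`-vector `(a, b, c)` with
`⁅a, b⁆ * c = 1` and `c` of cycle type `{2,2}`. -/
theorem no_generating_one_two_vector_of_alternating :
    ¬ ∃ a b : Equiv.Perm (Fin 5),
      a ∈ alternatingGroup (Fin 5) ∧ b ∈ alternatingGroup (Fin 5) ∧
      Subgroup.closure {a, b} = alternatingGroup (Fin 5) ∧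
      (⁅a, b⁆).cycleType = {2, 2} := by
  rintro ⟨a, b, ha, hb, hgen, hct⟩
  have hsq : ⁅a, b⁆ ^ 2 = 1 := by
    have h := Equiv.Perm.lcm_cycleType ⁅a, b⁆
    rw [hct] at h
    have h2 : orderOf ⁅a, b⁆ = 2 := by rw [← h]; decide
    rw [← h2]; exact pow_orderOf_eq_one _
  have hne : ⁅a, b⁆ ≠ 1 := by
    intro h
    rw [h, Equiv.Perm.cycleType_one] at hct
    simp at hct
  obtain ⟨x, hax, hbx⟩ := common_fixed_of_involution_commutator a b
    (Equiv.Perm.mem_alternatingGroup.mp ha) (Equiv.Perm.mem_alternatingGroup.mp hb) hsq hne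
  have hle : Subgroup.closure {a, b} ≤ MulAction.stabilizer (Equiv.Perm (Fin 5)) x := by
    apply (Subgroup.closure_le _).mpr
    rintro g (rfl | rfl) <;> simpa [MulAction.mem_stabilizer_iff]
  rw [hgen] at hle
  obtain ⟨g, hg, hgx⟩ := exists_moving x
  exact hgx (hle hg)
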